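/- Let G be a finite simple graph on [n] with edge ideal I(G) over a field of characteristic zero. The chromatic number χ(G) is the smallest integer r ≥ 0 such that the r-th secant ideal I(G)^{{r}} is the zero ideal. -/

import Mathlib

open MvPolynomial

/-- The join `I * J` of two ideals in `K[x_1,...,x_n]`: the elimination ideal
`(I(y) + J(z) + ⟨y_i + z_i - x_i⟩) ∩ K[x]`, realized in the polynomial ring on
`Fin n ⊕ (Fin n ⊕ Fin n)` where `Sum.inl` are the `x`-variables, `Sum.inr ∘ Sum.inl`
the `y`-variables and `Sum.inr ∘ Sum.inr` the `z`-variables. -/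
noncomputable def joinIdeal {K : Type*} [Field K] {n : ℕ}
    (I J : Ideal (MvPolynomial (Fin n) K)) : Ideal (MvPolynomial (Fin n) K) :=
  Ideal.comap (rename (Sum.inl : Fin n → Fin n ⊕ (Fin n ⊕ Fin n)))
    (Ideal.map (rename (fun i : Fin n => (Sum.inr (Sum.inl i) : Fin n ⊕ (Fin n ⊕ Fin n)))) I ⊔
     Ideal.map (rename (fun i : Fin n => (Sum.inr (Sum.inr i) : Fin n ⊕ (Fin n ⊕ Fin n)))) J ⊔
     Ideal.span {p : MvPolynomial (Fin n ⊕ (Fin n ⊕ Fin n)) K | ∃ i : Fin n,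
       p = X (Sum.inr (Sum.inl i)) + X (Sum.inr (Sum.inr i)) - X (Sum.inl i)})

/-- The `r`-th secant ideal `I^{r}`, the `r`-fold join of `I` with itself.
(The `0`-th secant is the irrelevant maximal ideal `⟨x_1,...,x_n⟩`, the identity for join.) -/
noncomputable def secantIdeal {K : Type*} [Field K] {n : ℕ}
    (I : Ideal (MvPolynomial (Fin n) K)) : ℕ → Ideal (MvPolynomial (Fin n) K)
  | 0 => Ideal.span (Set.range X)
  | 1 => I
  | (r + 2) => joinIdeal (secantIdeal I (r + 1)) I

/-- The edge ideal `I(G)` of a graph `G` on `[n]`, generated by the monomials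
`x_i x_j` for edges `{i,j}` of `G`. -/
noncomputable def edgeIdeal (K : Type*) [Field K] {n : ℕ} (G : SimpleGraph (Fin n)) :
    Ideal (MvPolynomial (Fin n) K) :=
  Ideal.span {p : MvPolynomial (Fin n) K | ∃ i j : Fin n, G.Adj i j ∧ p = X i * X j}

section Aux

variable {K : Type*} [Field K] {n : ℕ} (G : SimpleGraph (Fin n))

/-- Partial colorability: `W` can be properly colored with colors `0,…,r-1`. -/
def PColorable (r : ℕ) (W : Finset (Fin n)) : Prop :=
  ∃ f : Fin n → ℕ, (∀ i ∈ W, f i < r) ∧ ∀ i ∈ W, ∀ j ∈ W, G.Adj i j → f i ≠ f j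

lemma edgeIdeal_le_ker (d : Fin n → K) (hd : ∀ i j, G.Adj i j → d i * d j = 0) :
    edgeIdeal K G ≤ RingHom.ker (eval d) := by
  rw [edgeIdeal, Ideal.span_le]
  rintro p ⟨i, j, hij, rfl⟩
  simp [RingHom.mem_ker, hd i j hij]

/-- Vanishing lemma: the `r`-th secant vanishes at any sum of `r` "independent" points. -/
lemma secant_vanish : ∀ (r : ℕ) (a : Fin n → K) (c : Fin r → (Fin n → K)),
    (∀ k i j, G.Adj i j → c k i * c k j = 0) → a = ∑ k, c k →
    secantIdeal (edgeIdeal K G) r ≤ RingHom.ker (eval a)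
  | 0, a, c, hc, ha => by
    have ha0 : a = 0 := by simpa using ha
    show Ideal.span (Set.range X) ≤ _
    rw [Ideal.span_le]
    rintro p ⟨i, rfl⟩
    simp [RingHom.mem_ker, ha0]
  | 1, a, c, hc, ha => by
    have : a = c 0 := by simpa [Fin.sum_univ_one] using ha
    subst this
    exact edgeIdeal_le_ker G _ (hc 0)
  | (r + 2), a, c, hc, ha => by
    set b : Fin n → K := ∑ k : Fin (r + 1), c k.castSucc with hb
    set d : Fin n → K := c (Fin.last (r + 1)) with hdd
    have habd : a = b + d := by
      rw [ha, hb, hdd, Fin.sum_univ_castSucc]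
    set φ : Fin n ⊕ (Fin n ⊕ Fin n) → K := Sum.elim a (Sum.elim b d) with hφ
    have hbig : (Ideal.map (rename (fun i : Fin n => (Sum.inr (Sum.inl i) : Fin n ⊕ (Fin n ⊕ Fin n))))
          (secantIdeal (edgeIdeal K G) (r + 1)) ⊔
        Ideal.map (rename (fun i : Fin n => (Sum.inr (Sum.inr i) : Fin n ⊕ (Fin n ⊕ Fin n))))
          (edgeIdeal K G) ⊔
        Ideal.span {p : MvPolynomial (Fin n ⊕ (Fin n ⊕ Fin n)) K | ∃ i : Fin n,
          p = X (Sum.inr (Sum.inl i)) + X (Sum.inr (Sum.inr i)) - X (Sum.inl i)}) ≤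
        RingHom.ker (eval φ) := by
      refine sup_le (sup_le ?_ ?_) ?_
      · rw [Ideal.map_le_iff_le_comap]
        intro p hp
        have := secant_vanish (r + 1) b (fun k => c k.castSucc)
          (fun k => hc k.castSucc) rfl hp
        simp only [Ideal.mem_comap, RingHom.mem_ker, coe_eval₂Hom, eval_rename] at this ⊢
        exact this
      · rw [Ideal.map_le_iff_le_comap]
        intro p hp
        have := edgeIdeal_le_ker G d (hc (Fin.last (r + 1))) hp
        simp only [Ideal.mem_comap, RingHom.mem_ker, eval_rename] at this ⊢
        exact this
      · rw [Ideal.span_le]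
        rintro p ⟨i, rfl⟩
        have : a i = b i + d i := by rw [habd]; rfl
        simp [RingHom.mem_ker, hφ, this]
    intro q hq
    have hq' : rename (Sum.inl : Fin n → Fin n ⊕ (Fin n ⊕ Fin n)) q ∈ RingHom.ker (eval φ) :=
      hbig hq
    rw [RingHom.mem_ker, eval_rename] at hq'
    simpa [hφ] using hq'

/-- Combinatorial splitting step. -/
lemma split_claim (r : ℕ) (W U : Finset (Fin n)) (hUW : U ⊆ W)
    (hW : ¬ PColorable G (r + 2) W) :
    ¬ PColorable G (r + 1) U ∨ ∃ i ∈ W \ U, ∃ j ∈ W \ U, G.Adj i j := by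
  by_cases hU : PColorable G (r + 1) U
  · right
    by_contra hind
    push_neg at hind
    obtain ⟨f, hfb, hfv⟩ := hU
    refine hW ⟨fun i => if i ∈ U then f i else r + 1, fun i hi => ?_, ?_⟩
    · by_cases h : i ∈ U
      · simp only [h, if_true]; exact (hfb i h).trans (by omega)
      · simp [h]
    · intro i hi j hj hadj
      by_cases h1 : i ∈ U <;> by_cases h2 : j ∈ U <;> simp only [h1, h2, if_pos, if_neg,
        if_true, if_false]
      · exact hfv i h1 j h2 hadj
      · exact Nat.ne_of_lt (hfb i h1)
      · exact (Nat.ne_of_lt (hfb j h2)).symm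
      · exact absurd hadj (hind i (Finset.mem_sdiff.2 ⟨hi, h1⟩) j (Finset.mem_sdiff.2 ⟨hj, h2⟩))
  · left; exact hU

lemma prod_mem_secant : ∀ (r : ℕ) (W : Finset (Fin n)), ¬ PColorable G r W →
    (∏ i ∈ W, X i : MvPolynomial (Fin n) K) ∈ secantIdeal (edgeIdeal K G) r
  | 0, W, hW => by
    have hne : W.Nonempty := by
      rcases W.eq_empty_or_nonempty with rfl | h
      · exact absurd ⟨fun _ => 0, by simp, by simp⟩ hW
      · exact h
    obtain ⟨i, hi⟩ := hne
    rw [← Finset.mul_prod_erase _ _ hi]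
    exact Ideal.mul_mem_right _ _ (Ideal.subset_span ⟨i, rfl⟩)
  | 1, W, hW => by
    have : ∃ i ∈ W, ∃ j ∈ W, G.Adj i j := by
      by_contra h
      push_neg at h
      exact hW ⟨fun _ => 0, by simp, fun i hi j hj hadj => absurd hadj (h i hi j hj)⟩
    obtain ⟨i, hi, j, hj, hadj⟩ := this
    have hj' : j ∈ W.erase i := Finset.mem_erase.2 ⟨hadj.ne', hj⟩
    rw [← Finset.mul_prod_erase _ _ hi, ← Finset.mul_prod_erase _ _ hj', ← mul_assoc]
    exact Ideal.mul_mem_right _ _ (Ideal.subset_span ⟨i, j, hadj, rfl⟩)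
  | (r + 2), W, hW => by
    show _ ∈ joinIdeal (secantIdeal (edgeIdeal K G) (r + 1)) (edgeIdeal K G)
    rw [joinIdeal, Ideal.mem_comap]
    set ι : Type _ := Fin n ⊕ (Fin n ⊕ Fin n)
    set y : Fin n → MvPolynomial ι K := fun i => X (Sum.inr (Sum.inl i)) with hy
    set z : Fin n → MvPolynomial ι K := fun i => X (Sum.inr (Sum.inr i)) with hz
    set L : Ideal (MvPolynomial ι K) := Ideal.span {p : MvPolynomial ι K | ∃ i : Fin n,
       p = X (Sum.inr (Sum.inl i)) + X (Sum.inr (Sum.inr i)) - X (Sum.inl i)} with hL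
    set J0 : Ideal (MvPolynomial ι K) :=
      Ideal.map (rename (fun i : Fin n => (Sum.inr (Sum.inl i) : ι)))
        (secantIdeal (edgeIdeal K G) (r + 1)) ⊔
      Ideal.map (rename (fun i : Fin n => (Sum.inr (Sum.inr i) : ι))) (edgeIdeal K G) with hJ0
    -- step 1 : the expanded product lies in J0
    have hstep1 : (∏ i ∈ W, (y i + z i)) ∈ J0 := by
      rw [Finset.prod_add]
      refine Ideal.sum_mem _ fun U hU => ?_
      rw [Finset.mem_powerset] at hU
      rcases split_claim G r W U hU hW with h | ⟨i, hi, j, hj, hadj⟩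
      · have hS := prod_mem_secant (r + 1) U h
        have hmem : (∏ i ∈ U, y i) ∈ Ideal.map
            (rename (fun i : Fin n => (Sum.inr (Sum.inl i) : ι)))
            (secantIdeal (edgeIdeal K G) (r + 1)) := by
          have := Ideal.mem_map_of_mem (rename (fun i : Fin n => (Sum.inr (Sum.inl i) : ι))) hS
          simpa [map_prod] using this
        exact Ideal.mem_sup_left (Ideal.mul_mem_right _ _ hmem)
      · have hXX : (X i * X j : MvPolynomial (Fin n) K) ∈ edgeIdeal K G :=
          Ideal.subset_span ⟨i, j, hadj, rfl⟩
        have hmemz : (z i * z j) ∈ Ideal.map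
            (rename (fun i : Fin n => (Sum.inr (Sum.inr i) : ι))) (edgeIdeal K G) := by
          have := Ideal.mem_map_of_mem (rename (fun i : Fin n => (Sum.inr (Sum.inr i) : ι))) hXX
          simpa using this
        have hj' : j ∈ (W \ U).erase i := Finset.mem_erase.2 ⟨hadj.ne', hj⟩
        have hfac : (∏ k ∈ U, y k) * ∏ k ∈ W \ U, z k
            = (z i * z j) * ((∏ k ∈ U, y k) * ∏ k ∈ ((W \ U).erase i).erase j, z k) := by
          rw [← Finset.mul_prod_erase _ _ hi, ← Finset.mul_prod_erase _ _ hj']; ring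
        rw [hfac]
        exact Ideal.mem_sup_right (Ideal.mul_mem_right _ _ hmemz)
    -- step 2 : the difference lies in L
    have hstep2 : (∏ i ∈ W, X (Sum.inl i : ι)) - (∏ i ∈ W, (y i + z i)) ∈ L := by
      rw [← Ideal.Quotient.eq, map_prod, map_prod]
      refine Finset.prod_congr rfl fun i _ => ?_
      rw [Ideal.Quotient.eq]
      have h1 : (X (Sum.inl i : ι) - (y i + z i)) = -((y i + z i) - X (Sum.inl i)) := by ring
      rw [h1]
      exact neg_mem (Ideal.subset_span ⟨i, rfl⟩)
    have hren : (rename (Sum.inl : Fin n → ι)) (∏ i ∈ W, X i)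
        = ∏ i ∈ W, (X (Sum.inl i : ι) : MvPolynomial ι K) := by
      simp [map_prod]
    rw [hren]
    have hfinal : (∏ i ∈ W, X (Sum.inl i : ι)) =
        (∏ i ∈ W, (y i + z i)) + ((∏ i ∈ W, X (Sum.inl i : ι)) - ∏ i ∈ W, (y i + z i)) := by
      ring
    rw [hfinal]
    exact Ideal.add_mem _ (Ideal.mem_sup_left hstep1) (Ideal.mem_sup_right hstep2)

end Aux

section Bridge

variable {K : Type*} [Field K] {n : ℕ} (G : SimpleGraph (Fin n))

lemma pcolorable_univ_iff (r : ℕ) : PColorable G r Finset.univ ↔ G.Colorable r := by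
  constructor
  · rintro ⟨f, hb, hv⟩
    exact ⟨SimpleGraph.Coloring.mk (fun i => ⟨f i, hb i (Finset.mem_univ i)⟩)
      (fun {i j} hadj h =>
        hv i (Finset.mem_univ i) j (Finset.mem_univ j) hadj (by simpa [Fin.ext_iff] using h))⟩
  · rintro ⟨C⟩
    exact ⟨fun i => (C i : ℕ), fun i _ => (C i).isLt, fun i _ j _ hadj h =>
      C.valid hadj (Fin.val_injective h)⟩

lemma secant_eq_bot_iff [CharZero K] (r : ℕ) :
    secantIdeal (edgeIdeal K G) r = ⊥ ↔ G.Colorable r := by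
  constructor
  · intro h
    rw [← pcolorable_univ_iff]
    by_contra hP
    have hmem := prod_mem_secant (K := K) G r Finset.univ hP
    rw [h, Ideal.mem_bot] at hmem
    have hne : (∏ i : Fin n, (X i : MvPolynomial (Fin n) K)) ≠ 0 :=
      Finset.prod_ne_zero_iff.2 fun i _ => X_ne_zero i
    exact hne hmem
  · rintro ⟨C⟩
    refine le_bot_iff.1 fun q hq => ?_
    rw [Ideal.mem_bot]
    have hz : ∀ a : Fin n → K, eval a q = 0 := by
      intro a
      refine secant_vanish G r a (fun k i => if C i = k then a i else 0) ?_ ?_ hq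
      · intro k i j hadj
        have hne := C.valid hadj
        by_cases h1 : C i = k <;> by_cases h2 : C j = k <;> simp [h1, h2]
        exact absurd (h1.trans h2.symm) hne
      · funext i
        simp [Finset.sum_apply, Finset.sum_ite_eq]
    exact MvPolynomial.funext (q := 0) (fun a => by simp [hz a])

end Bridge


/-- in characteristic zero, the chromatic number of `G` is the smallest
`r ≥ 0` such that the `r`-th secant ideal of the edge ideal `I(G)` is the zero ideal. -/
theorem stmt_6 (K : Type*) [Field K] [CharZero K] (n : ℕ) (G : SimpleGraph (Fin n)) :
    G.chromaticNumber =
      sInf {c : ℕ∞ | ∃ r : ℕ, c = (r : ℕ∞) ∧ secantIdeal (edgeIdeal K G) r = ⊥} := by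
  have hset : {c : ℕ∞ | ∃ r : ℕ, c = (r : ℕ∞) ∧ secantIdeal (edgeIdeal K G) r = ⊥}
      = (fun r : ℕ => (r : ℕ∞)) '' setOf G.Colorable := by
    ext c
    simp only [Set.mem_setOf_eq, Set.mem_image]
    constructor
    · rintro ⟨r, rfl, h⟩; exact ⟨r, (secant_eq_bot_iff (K := K) G r).1 h, rfl⟩
    · rintro ⟨r, h, rfl⟩; exact ⟨r, rfl, (secant_eq_bot_iff (K := K) G r).2 h⟩
  rw [hset, sInf_image]
  rfl
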